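/- arXiv:1509.01994 — 4 statements merged into one kernel-verified Lean document; each statement's English description precedes it below -/
import Mathlib

section
/- Assume (A1)-(A4), (B1), (B2) and (B4), and for u ∈ X⁺ let m(u) be the unique point of M with m(u)⁺ = u. Then: (iv) a sequence (uₙ) ⊂ X⁺ is a Palais–Smale sequence for J ∘ m (i.e. (J∘m)(uₙ) converges and (J∘m)'(uₙ) → 0) if and only if (m(uₙ)) is a Palais–Smale sequence for J contained in M; (v) u ∈ X⁺ is a critical point of J ∘ m if and only if m(u) is a critical point of J; (vi) if J is even then J ∘ m is even. -/
open Filter Topology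
open NormedSpace TopologicalSpace Asymptotics

set_option maxHeartbeats 1600000

noncomputable section

variable {H W : Type*} [NormedAddCommGroup H] [InnerProductSpace ℝ H] [CompleteSpace H]
  [NormedAddCommGroup W] [NormedSpace ℝ W] [CompleteSpace W]

/-- `uₙ` T-converges to `l`: `uₙ⁺ → l⁺` in the norm of `H` and `ũₙ ⇀ l̃` weakly in `W`. -/
def TConv (u : ℕ → H × W) (l : H × W) : Prop :=
  Tendsto (fun n => (u n).1) atTop (𝓝 l.1) ∧
    ∀ φ : W →L[ℝ] ℝ, Tendsto (fun n => φ (u n).2) atTop (𝓝 (φ l.2))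

/-- The Nehari–Pankov set
`N = {u ≠ 0 : J(u) > 0 and J'(u)[w] = 0 for all w ∈ ℝu + X̃}`. -/
def NehariPankov (J : H × W → ℝ) : Set (H × W) :=
  {u | u ≠ 0 ∧ 0 < J u ∧ ∀ (s : ℝ) (v : W), fderiv ℝ J u (s • u + ((0 : H), v)) = 0}

/-- The natural constraint `M = {u : I'(u)[v] = 0 for all v ∈ X̃}`. -/
def NatConstraint (I : H × W → ℝ) : Set (H × W) :=
  {u | ∀ v : W, fderiv ℝ I u ((0 : H), v) = 0}

lemma aux_zero_on_submodule {Z : Type*} [NormedAddCommGroup Z] [NormedSpace ℝ Z]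
    (f : Z →L[ℝ] ℝ) (S : Submodule ℝ Z) (u : ℝ) (h : ∀ b ∈ S, f b < u) :
    ∀ b ∈ S, f b = 0 := by
  intro b hb
  by_contra hfb
  have ht := h _ (S.smul_mem ((|u| + 1) / f b) hb)
  rw [map_smul, smul_eq_mul, div_mul_cancel₀ _ hfb] at ht
  have : u ≤ |u| := le_abs_self u
  linarith

lemma aux_sep_of_dual_sep (Z : Type*) [NormedAddCommGroup Z] [NormedSpace ℝ Z]
    [SeparableSpace (StrongDual ℝ Z)] : SeparableSpace Z := by
  obtain ⟨d, hd⟩ := TopologicalSpace.exists_dense_seq (StrongDual ℝ Z)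
  have hz : ∀ k : ℕ, ∃ zk : Z, ‖zk‖ ≤ 1 ∧ ‖d k‖ / 2 ≤ d k zk := by
    intro k
    rcases eq_or_ne (d k) 0 with h0 | h0
    · exact ⟨0, by simp [h0]⟩
    · have hlt : ‖d k‖ / 2 < ‖d k‖ := by
        have := norm_pos_iff.mpr h0
        linarith
      obtain ⟨zk, hz1, hz2⟩ := (d k).exists_lt_apply_of_lt_opNorm hlt
      rcases le_or_gt 0 (d k zk) with hs | hs
      · refine ⟨zk, hz1.le, ?_⟩
        rw [Real.norm_eq_abs, abs_of_nonneg hs] at hz2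
        exact hz2.le
      · refine ⟨-zk, by simpa using hz1.le, ?_⟩
        rw [map_neg]
        rw [Real.norm_eq_abs, abs_of_neg hs] at hz2
        linarith
  choose z hz1 hz2 using hz
  set S := (Submodule.span ℝ (Set.range z)).topologicalClosure with hS
  have hSsep : IsSeparable (S : Set Z) := ((Set.countable_range z).isSeparable.span).closure
  have hStop : S = ⊤ := by
    by_contra hne
    obtain ⟨w, hw⟩ : ∃ w, w ∉ S := by
      by_contra h; push_neg at h; exact hne (Submodule.eq_top_iff'.2 h)
    obtain ⟨f, u, hfu, huw⟩ := geometric_hahn_banach_closed_point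
      S.convex (Submodule.isClosed_topologicalClosure _) hw
    have hf0 : ∀ b ∈ S, f b = 0 := aux_zero_on_submodule f S u hfu
    have hu0 : (0:ℝ) < u := by have := hfu 0 S.zero_mem; simpa using this
    have hfpos : 0 < ‖f‖ := by
      rcases eq_or_ne f 0 with rfl | hf
      · simp at huw; linarith
      · exact norm_pos_iff.mpr hf
    obtain ⟨k, hk⟩ : ∃ k, dist f (d k) < ‖f‖ / 8 := by
      have := hd.exists_dist_lt f (by positivity : (0:ℝ) < ‖f‖/8)
      exact this
    have hzS : z k ∈ S := Submodule.le_topologicalClosure _ (Submodule.subset_span ⟨k, rfl⟩)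
    have hfz : f (z k) = 0 := hf0 _ hzS
    have hdist : ‖f - d k‖ < ‖f‖/8 := by rwa [dist_eq_norm] at hk
    have h1 : ‖f‖ - ‖f‖/8 ≤ ‖d k‖ := by
      have := norm_sub_norm_le f (d k)
      linarith
    have h3 : ‖d k‖ / 2 ≤ d k (z k) := hz2 k
    have h4 : d k (z k) = (d k - f) (z k) := by
      simp [ContinuousLinearMap.sub_apply, hfz]
    have h6 : ‖d k - f‖ < ‖f‖/8 := by rwa [← neg_sub, norm_neg] at hdist
    have h5 : (d k - f) (z k) ≤ ‖f‖ / 8 := by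
      calc (d k - f) (z k) ≤ ‖(d k - f) (z k)‖ := le_abs_self _
        _ ≤ ‖d k - f‖ * ‖z k‖ := (d k - f).le_opNorm _
        _ ≤ ‖d k - f‖ * 1 := by
            have := norm_nonneg (d k - f)
            nlinarith [hz1 k]
        _ ≤ ‖f‖/8 := by linarith
    linarith
  have huniv : IsSeparable (Set.univ : Set Z) := by
    have : (S : Set Z) = Set.univ := by rw [hStop]; rfl
    rwa [this] at hSsep
  exact isSeparable_univ_iff.mp huniv


section Chunk2
variable {W : Type*} [NormedAddCommGroup W] [NormedSpace ℝ W]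

lemma aux_restrict_norm_le (Y : Submodule ℝ W) (φ : StrongDual ℝ W) :
    ‖φ.comp Y.subtypeL‖ ≤ ‖φ‖ := by
  refine ContinuousLinearMap.opNorm_le_bound _ (norm_nonneg φ) fun y => ?_
  calc ‖(φ.comp Y.subtypeL) y‖ = ‖φ (y : W)‖ := rfl
    _ ≤ ‖φ‖ * ‖(y : W)‖ := φ.le_opNorm _
    _ = ‖φ‖ * ‖y‖ := rfl

lemma aux_refl_closed_subspace
    (hWrefl : Function.Surjective (NormedSpace.inclusionInDoubleDual ℝ W))
    (Y : Submodule ℝ W) (hY : IsClosed (Y : Set W)) :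
    Function.Surjective (NormedSpace.inclusionInDoubleDual ℝ ↥Y) := by
  intro F
  set Fhat : StrongDual ℝ W →L[ℝ] ℝ := LinearMap.mkContinuous
    { toFun := fun φ => F (φ.comp Y.subtypeL)
      map_add' := fun φ ψ => by
        show F ((φ + ψ).comp Y.subtypeL) = F (φ.comp Y.subtypeL) + F (ψ.comp Y.subtypeL)
        rw [ContinuousLinearMap.add_comp, map_add]
      map_smul' := fun c φ => by
        show F ((c • φ).comp Y.subtypeL) = (RingHom.id ℝ) c • F (φ.comp Y.subtypeL)
        rw [ContinuousLinearMap.smul_comp, map_smul, RingHom.id_apply, smul_eq_mul] } ‖F‖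
    (fun φ => by
      have h1 : ‖F (φ.comp Y.subtypeL)‖ ≤ ‖F‖ * ‖φ.comp Y.subtypeL‖ := F.le_opNorm _
      have h2 := aux_restrict_norm_le Y φ
      have := norm_nonneg F
      calc ‖F (φ.comp Y.subtypeL)‖ ≤ ‖F‖ * ‖φ.comp Y.subtypeL‖ := h1
        _ ≤ ‖F‖ * ‖φ‖ := by nlinarith) with hFhat
  obtain ⟨w, hw⟩ := hWrefl Fhat
  have hwval : ∀ φ : StrongDual ℝ W, φ w = F (φ.comp Y.subtypeL) := by
    intro φ
    have := ContinuousLinearMap.ext_iff.mp hw φ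
    rwa [NormedSpace.dual_def] at this
  have hwY : w ∈ Y := by
    by_contra hwY
    obtain ⟨f, u, hfu, huw⟩ := geometric_hahn_banach_closed_point Y.convex hY hwY
    have hf0 : ∀ b ∈ Y, f b = 0 := aux_zero_on_submodule f Y u hfu
    have hcomp0 : f.comp Y.subtypeL = 0 := by
      ext y; exact hf0 _ y.2
    have h1 : f w = 0 := by rw [hwval f, hcomp0, map_zero]
    have h2 : (0:ℝ) < u := by have := hfu 0 Y.zero_mem; simpa using this
    rw [h1] at huw; linarith
  refine ⟨⟨w, hwY⟩, ?_⟩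
  ext f
  rw [NormedSpace.dual_def]
  obtain ⟨g, hg, -⟩ := exists_extension_norm_eq (𝕜 := ℝ) Y f
  have hcomp : g.comp Y.subtypeL = f := by
    ext y; exact hg y
  calc f ⟨w, hwY⟩ = g w := (hg ⟨w, hwY⟩).symm
    _ = F (g.comp Y.subtypeL) := hwval g
    _ = F f := by rw [hcomp]

lemma aux_weak_seq_compact
    (hWrefl : Function.Surjective (NormedSpace.inclusionInDoubleDual ℝ W))
    (x : ℕ → W) (C : ℝ) (hC : ∀ n, ‖x n‖ ≤ C) :
    ∃ (ψ : ℕ → ℕ) (l : W), StrictMono ψ ∧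
      ∀ φ : W →L[ℝ] ℝ, Tendsto (fun n => φ (x (ψ n))) atTop (𝓝 (φ l)) := by
  have hC0 : 0 ≤ C := le_trans (norm_nonneg (x 0)) (hC 0)
  set Y := (Submodule.span ℝ (Set.range x)).topologicalClosure with hYdef
  have hxY : ∀ n, x n ∈ Y := fun n =>
    Submodule.le_topologicalClosure _ (Submodule.subset_span ⟨n, rfl⟩)
  set xh : ℕ → ↥Y := fun n => ⟨x n, hxY n⟩ with hxh
  have hxhnorm : ∀ n, ‖xh n‖ ≤ C := fun n => hC n
  haveI hYsep : SeparableSpace ↥Y :=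
    (((Set.countable_range x).isSeparable.span).closure).separableSpace
  have hYrefl := aux_refl_closed_subspace hWrefl Y (Submodule.isClosed_topologicalClosure _)
  haveI hsep2 : SeparableSpace (StrongDual ℝ (StrongDual ℝ ↥Y)) :=
    hYrefl.denseRange.separableSpace (NormedSpace.inclusionInDoubleDual ℝ ↥Y).continuous
  haveI hsep3 : SeparableSpace (StrongDual ℝ ↥Y) := aux_sep_of_dual_sep (StrongDual ℝ ↥Y)
  obtain ⟨d, hd⟩ := TopologicalSpace.exists_dense_seq (StrongDual ℝ ↥Y)
  set K : Set (ℕ → ℝ) := Set.pi Set.univ (fun k => Set.Icc (-(‖d k‖ * C)) (‖d k‖ * C)) with hK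
  have hKcomp : IsCompact K := isCompact_univ_pi fun k => isCompact_Icc
  have hmem : ∀ n, (fun k => d k (xh n)) ∈ K := by
    intro n k _
    have h1 : ‖d k (xh n)‖ ≤ ‖d k‖ * ‖xh n‖ := (d k).le_opNorm _
    have h3 : ‖d k (xh n)‖ ≤ ‖d k‖ * C := by nlinarith [norm_nonneg (d k), hxhnorm n]
    rw [Real.norm_eq_abs, abs_le] at h3
    exact ⟨by linarith [h3.1], h3.2⟩
  obtain ⟨g, hgK, ψ, hψ, hψtend⟩ := hKcomp.isSeqCompact hmem
  have hcoord : ∀ k, Tendsto (fun n => d k (xh (ψ n))) atTop (𝓝 (g k)) := fun k =>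
    tendsto_pi_nhds.mp hψtend k
  have hcauchy : ∀ f : StrongDual ℝ ↥Y, CauchySeq (fun n => f (xh (ψ n))) := by
    intro f
    rw [Metric.cauchySeq_iff]
    intro ε hε
    have hε4 : 0 < ε / (4 * (C + 1)) := by positivity
    obtain ⟨k, hk⟩ := hd.exists_dist_lt f hε4
    have hkc : CauchySeq (fun n => d k (xh (ψ n))) := (hcoord k).cauchySeq
    obtain ⟨N, hN⟩ := Metric.cauchySeq_iff.mp hkc (ε / 4) (by positivity)
    refine ⟨N, fun p hp q hq => ?_⟩
    have hfd : ‖f - d k‖ < ε / (4 * (C + 1)) := lt_of_eq_of_lt (dist_eq_norm f (d k)).symm hk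
    have key : ∀ n, ‖f (xh (ψ n)) - d k (xh (ψ n))‖ ≤ ε / 4 := by
      intro n
      have h1 : ‖(f - d k) (xh (ψ n))‖ ≤ ‖f - d k‖ * ‖xh (ψ n)‖ := (f - d k).le_opNorm _
      rw [ContinuousLinearMap.sub_apply] at h1
      have h2 : ‖f - d k‖ * ‖xh (ψ n)‖ ≤ (ε / (4 * (C + 1))) * C := by
        have := norm_nonneg (f - d k)
        nlinarith [hxhnorm (ψ n)]
      have h3 : (ε / (4 * (C + 1))) * C ≤ ε / 4 := by
        rw [div_mul_eq_mul_div, div_le_div_iff₀ (by positivity) (by norm_num)]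
        nlinarith
      linarith
    have hNpq := hN p hp q hq
    rw [Real.dist_eq] at hNpq ⊢
    have k1 := key p
    have k2 := key q
    rw [Real.norm_eq_abs] at k1 k2
    have : |f (xh (ψ p)) - f (xh (ψ q))| ≤
        |f (xh (ψ p)) - d k (xh (ψ p))| + |d k (xh (ψ p)) - d k (xh (ψ q))|
          + |d k (xh (ψ q)) - f (xh (ψ q))| := by
      have := abs_sub_abs_le_abs_sub (f (xh (ψ p))) (f (xh (ψ q)))
      calc |f (xh (ψ p)) - f (xh (ψ q))|
          = |(f (xh (ψ p)) - d k (xh (ψ p))) + (d k (xh (ψ p)) - d k (xh (ψ q)))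
            + (d k (xh (ψ q)) - f (xh (ψ q)))| := by ring_nf
        _ ≤ _ := by
            refine le_trans (abs_add_le _ _) ?_
            have := abs_add_le (f (xh (ψ p)) - d k (xh (ψ p))) (d k (xh (ψ p)) - d k (xh (ψ q)))
            linarith
    have habs : |d k (xh (ψ q)) - f (xh (ψ q))| = |f (xh (ψ q)) - d k (xh (ψ q))| :=
      abs_sub_comm _ _
    rw [habs] at this
    linarith
  have hconv : ∀ φ : StrongDual ℝ W, ∃ c : ℝ, Tendsto (fun n => φ (x (ψ n))) atTop (𝓝 c) := by
    intro φ
    have heq : (fun n => φ (x (ψ n))) = fun n => (φ.comp Y.subtypeL) (xh (ψ n)) := rfl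
    rw [heq]
    exact cauchySeq_tendsto_of_complete (hcauchy _)
  choose lim hlim using hconv
  have hadd : ∀ φ₁ φ₂, lim (φ₁ + φ₂) = lim φ₁ + lim φ₂ := fun φ₁ φ₂ =>
    tendsto_nhds_unique (hlim _) (by simpa using (hlim φ₁).add (hlim φ₂))
  have hsmul : ∀ (c : ℝ) (φ), lim (c • φ) = c * lim φ := fun c φ =>
    tendsto_nhds_unique (hlim _) (by simpa using (hlim φ).const_mul c)
  have hbdd : ∀ φ : StrongDual ℝ W, ‖lim φ‖ ≤ C * ‖φ‖ := by
    intro φ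
    have h1 : Tendsto (fun n => ‖φ (x (ψ n))‖) atTop (𝓝 ‖lim φ‖) := (hlim φ).norm
    refine le_of_tendsto h1 (Eventually.of_forall fun n => ?_)
    calc ‖φ (x (ψ n))‖ ≤ ‖φ‖ * ‖x (ψ n)‖ := φ.le_opNorm _
      _ ≤ ‖φ‖ * C := by nlinarith [norm_nonneg φ, hC (ψ n)]
      _ = C * ‖φ‖ := mul_comm _ _
  set G : StrongDual ℝ W →L[ℝ] ℝ := LinearMap.mkContinuous
    { toFun := lim, map_add' := hadd,
      map_smul' := fun c φ => by rw [RingHom.id_apply, smul_eq_mul]; exact hsmul c φ } C hbdd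
    with hG
  obtain ⟨l, hl⟩ := hWrefl G
  refine ⟨ψ, l, hψ, fun φ => ?_⟩
  have hφl : φ l = lim φ := by
    have := ContinuousLinearMap.ext_iff.mp hl φ
    rwa [NormedSpace.dual_def] at this
  rw [hφl]
  exact hlim φ

end Chunk2

/-- **Claims (iv), (v), (vi) of Theorem 4.6.** Under (A1)-(A4), (B1), (B2), (B4), with `m(u)`
the unique point of `M` above `u ∈ X⁺`: a sequence in `X⁺` is a Palais–Smale sequence for
`J ∘ m` iff its image under `m` is a Palais–Smale sequence for `J` contained in `M`; `u` is a
critical point of `J ∘ m` iff `m(u)` is a critical point of `J`; and if `J` is even so is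
`J ∘ m`. -/
theorem statement11
    (I J : H × W → ℝ)
    (hWrefl : Function.Surjective (NormedSpace.inclusionInDoubleDual ℝ W))
    (hJ : ∀ u : H × W, J u = 1 / 2 * ‖u.1‖ ^ 2 - I u)
    -- (A1)
    (hIC1 : ContDiff ℝ 1 I) (hA1 : ∀ u : H × W, 0 ≤ I u) (hI0 : I 0 = 0)
    -- (A2)
    (hA2 : ∀ (u : ℕ → H × W) (l : H × W), TConv u l →
      I l ≤ Filter.liminf (fun n => I (u n)) atTop)
    -- (A3)
    (hA3 : ∀ (u : ℕ → H × W) (l : H × W), TConv u l →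
      Tendsto (fun n => I (u n)) atTop (𝓝 (I l)) → Tendsto u atTop (𝓝 l))
    -- (A4)
    (r a : ℝ) (hr : 0 < r)
    (ha : a = sInf {c : ℝ | ∃ h : H, ‖h‖ = r ∧ c = J (h, (0 : W))}) (hapos : 0 < a)
    -- (B1)
    (hB1 : ∀ u : ℕ → H × W, Tendsto (fun n => ‖u n‖) atTop atTop →
      Tendsto (fun n => ‖(u n).1‖ + I (u n)) atTop atTop)
    -- (B2)
    (hB2 : ∀ (t : ℕ → ℝ) (u : ℕ → H × W) (u₀ : H), u₀ ≠ 0 → Tendsto t atTop atTop →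
      Tendsto (fun n => (u n).1) atTop (𝓝 u₀) →
      Tendsto (fun n => I (t n • u n) / t n ^ 2) atTop atTop)
    -- (B4)
    (hB4 : ∀ u ∈ NatConstraint I, ∀ v : W, v ≠ 0 → I u < I (u + ((0 : H), v)))
    -- `m(h)` is the unique point of `M` above `h ∈ X⁺`
    (m : H → H × W)
    (hm : ∀ h : H, (m h ∈ NatConstraint I ∧ (m h).1 = h) ∧
      ∀ w : H × W, w ∈ NatConstraint I ∧ w.1 = h → w = m h) :
    -- (iv)
    (∀ u : ℕ → H,
      ((∃ c : ℝ, Tendsto (fun n => J (m (u n))) atTop (𝓝 c)) ∧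
        Tendsto (fun n => ‖fderiv ℝ (fun h : H => J (m h)) (u n)‖) atTop (𝓝 0)) ↔
      ((∀ n, m (u n) ∈ NatConstraint I) ∧
        (∃ c : ℝ, Tendsto (fun n => J (m (u n))) atTop (𝓝 c)) ∧
        Tendsto (fun n => ‖fderiv ℝ J (m (u n))‖) atTop (𝓝 0))) ∧
    -- (v)
    (∀ u : H, fderiv ℝ (fun h : H => J (m h)) u = 0 ↔ fderiv ℝ J (m u) = 0) ∧
    -- (vi)
    ((∀ w : H × W, J (-w) = J w) → ∀ h : H, J (m (-h)) = J (m h)) := by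
  classical
  have hmM : ∀ h : H, m h ∈ NatConstraint I := fun h => ((hm h).1).1
  have hmfst : ∀ h : H, (m h).1 = h := fun h => ((hm h).1).2
  have hmuniq : ∀ (h : H) (w : H × W), w ∈ NatConstraint I → w.1 = h → w = m h :=
    fun h w h1 h2 => (hm h).2 w ⟨h1, h2⟩
  have hJfun : J = fun u : H × W => 1 / 2 * ‖u.1‖ ^ 2 - I u := funext hJ
  have hIdiff : ∀ w : H × W, DifferentiableAt ℝ I w := fun w =>
    (hIC1.differentiable one_ne_zero).differentiableAt
  have hQ' : ∀ w : H × W, HasFDerivAt (fun u : H × W => 1 / 2 * ‖u.1‖ ^ 2)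
      (((1:ℝ)/2) • ((fderiv ℝ (fun y : H => ‖y‖ ^ 2) w.1).comp (ContinuousLinearMap.fst ℝ H W)))
      w := by
    intro w
    have hnsq : HasFDerivAt (fun y : H => ‖y‖ ^ 2) (fderiv ℝ (fun y : H => ‖y‖ ^ 2) w.1) w.1 :=
      (((contDiff_norm_sq ℝ (E := H) (n := 1)).differentiable one_ne_zero) w.1).hasFDerivAt
    exact (hnsq.comp w hasFDerivAt_fst).const_mul (1/2)
  have hQdiff : ∀ w : H × W, DifferentiableAt ℝ (fun u : H × W => 1 / 2 * ‖u.1‖ ^ 2) w :=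
    fun w => (hQ' w).differentiableAt
  have hJC1 : ContDiff ℝ 1 J := by
    rw [hJfun]
    exact (contDiff_const.mul ((contDiff_norm_sq ℝ (E := H) (n := 1)).comp contDiff_fst)).sub hIC1
  have hJdiff : ∀ w : H × W, DifferentiableAt ℝ J w := fun w =>
    (hJC1.differentiable one_ne_zero).differentiableAt
  have hIcont : Continuous I := hIC1.continuous
  -- the derivative of J vanishes in the fiber directions at points of M
  have hJsnd : ∀ w : H × W, w ∈ NatConstraint I → ∀ v : W, fderiv ℝ J w ((0:H), v) = 0 := by
    intro w hw v
    have hsub : fderiv ℝ J w = fderiv ℝ (fun u : H × W => 1 / 2 * ‖u.1‖ ^ 2) w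
        - fderiv ℝ I w := by
      rw [hJfun]
      exact fderiv_sub (hQdiff w) (hIdiff w)
    rw [hsub, ContinuousLinearMap.sub_apply, hw v, sub_zero, (hQ' w).fderiv,
      ContinuousLinearMap.smul_apply, ContinuousLinearMap.comp_apply,
      ContinuousLinearMap.coe_fst', map_zero, smul_zero]
  -- norm of the restriction to X⁺
  have hnorm_inl : ∀ f : H × W →L[ℝ] ℝ, (∀ v : W, f ((0:H), v) = 0) →
      ‖f.comp (ContinuousLinearMap.inl ℝ H W)‖ = ‖f‖ := by
    intro f hf
    have hmk : ∀ a : H, ‖((a, (0:W)) : H × W)‖ = ‖a‖ := by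
      intro a
      rw [Prod.norm_def]
      simp [max_eq_left (norm_nonneg a)]
    refine le_antisymm ?_ ?_
    · refine ContinuousLinearMap.opNorm_le_bound _ (norm_nonneg f) fun a => ?_
      rw [ContinuousLinearMap.comp_apply, ContinuousLinearMap.inl_apply]
      calc ‖f ((a, 0) : H × W)‖ ≤ ‖f‖ * ‖((a, (0:W)) : H × W)‖ := f.le_opNorm _
        _ = ‖f‖ * ‖a‖ := by rw [hmk]
    · refine ContinuousLinearMap.opNorm_le_bound _ (norm_nonneg _) fun p => ?_
      have hsplit : f p = (f.comp (ContinuousLinearMap.inl ℝ H W)) p.1 := by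
        conv_lhs => rw [show p = ((p.1, (0:W)) : H × W) + (((0:H), p.2) : H × W) by
          refine Prod.ext ?_ ?_ <;> simp]
        rw [map_add, hf p.2, add_zero, ContinuousLinearMap.comp_apply,
          ContinuousLinearMap.inl_apply]
      rw [hsplit]
      calc ‖(f.comp (ContinuousLinearMap.inl ℝ H W)) p.1‖
          ≤ ‖f.comp (ContinuousLinearMap.inl ℝ H W)‖ * ‖p.1‖ := ContinuousLinearMap.le_opNorm _ _
        _ ≤ ‖f.comp (ContinuousLinearMap.inl ℝ H W)‖ * ‖p‖ := by
            have := norm_fst_le p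
            nlinarith [norm_nonneg (f.comp (ContinuousLinearMap.inl ℝ H W))]
  -- fiber minimality of m
  have hfib_lt : ∀ (h : H) (w : H × W), w.1 = h → w ≠ m h → I (m h) < I w := by
    intro h w hw1 hwne
    have hv : w = m h + (((0:H), w.2 - (m h).2) : H × W) := by
      refine Prod.ext ?_ ?_
      · simp [hmfst h, hw1]
      · simp
    have hvne : w.2 - (m h).2 ≠ 0 := by
      intro h0
      apply hwne
      refine Prod.ext ?_ ?_
      · rw [hw1, hmfst]
      · rwa [sub_eq_zero] at h0
    rw [hv]
    exact hB4 (m h) (hmM h) _ hvne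
  have hfib_le : ∀ (h : H) (w : H × W), w.1 = h → I (m h) ≤ I w := by
    intro h w hw1
    rcases eq_or_ne w (m h) with rfl | hne
    · exact le_rfl
    · exact (hfib_lt h w hw1 hne).le
  have hJmax : ∀ (h : H) (w : H × W), w.1 = h → J w ≤ J (m h) := by
    intro h w hw1
    rw [hJ w, hJ (m h), hmfst, hw1]
    have := hfib_le h w hw1
    linarith
  -- continuity of m : the key subsequence extraction
  have hkey : ∀ (h : H) (hn : ℕ → H), Tendsto hn atTop (𝓝 h) →
      ∃ ms : ℕ → ℕ, Tendsto (fun n => m (hn (ms n))) atTop (𝓝 (m h)) := by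
    intro h hn hcv
    set wn : ℕ → H × W := fun n => m (hn n) with hwn
    set an : ℕ → ℝ := fun n => I (hn n, (m h).2) with han
    have hatend : Tendsto an atTop (𝓝 (I (m h))) := by
      have h1 : Tendsto (fun n => ((hn n, (m h).2) : H × W)) atTop (𝓝 ((h, (m h).2) : H × W)) :=
        hcv.prodMk_nhds tendsto_const_nhds
      have h2 := (hIcont.tendsto _).comp h1
      have h3 : ((h, (m h).2) : H × W) = m h := Prod.ext (hmfst h).symm rfl
      rwa [h3] at h2
    have hale : ∀ n, I (wn n) ≤ an n := fun n => hfib_le (hn n) ((hn n, (m h).2)) rfl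
    obtain ⟨Ba, hBa⟩ := hatend.bddAbove_range
    obtain ⟨Bh, hBh⟩ := (hcv.norm).bddAbove_range
    have hbd : ∃ C, ∀ n, ‖wn n‖ ≤ C := by
      by_contra hub
      push_neg at hub
      choose nk hnk using hub
      set u : ℕ → H × W := fun k => wn (nk k) with hu
      have hnormt : Tendsto (fun k : ℕ => ‖u k‖) atTop atTop := by
        apply tendsto_atTop_mono (fun k : ℕ => (hnk (k : ℝ)).le)
        exact tendsto_natCast_atTop_atTop
      have hBtend := hB1 u hnormt
      obtain ⟨k, hk⟩ := (hBtend.eventually_gt_atTop (Bh + Ba)).exists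
      have h1 : ‖(u k).1‖ ≤ Bh := by
        have heq : (u k).1 = hn (nk (k:ℝ)) := hmfst _
        rw [heq]
        exact hBh ⟨nk (k:ℝ), rfl⟩
      have h2 : I (u k) ≤ Ba := le_trans (hale (nk (k:ℝ))) (hBa ⟨nk (k:ℝ), rfl⟩)
      linarith
    obtain ⟨C, hCb⟩ := hbd
    have hsnd : ∀ n, ‖(wn n).2‖ ≤ C := fun n => (norm_snd_le (wn n)).trans (hCb n)
    obtain ⟨ψ, l, hψmono, hψweak⟩ := aux_weak_seq_compact hWrefl (fun n => (wn n).2) C hsnd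
    have hψat : Tendsto ψ atTop atTop := hψmono.tendsto_atTop
    have hTconv : TConv (fun n => wn (ψ n)) ((h, l) : H × W) := by
      constructor
      · have h1 : (fun n => (wn (ψ n)).1) = fun n => hn (ψ n) := funext fun n => hmfst _
        rw [h1]
        exact hcv.comp hψat
      · intro φ
        exact hψweak φ
    have hA2' := hA2 _ _ hTconv
    have hble : ∀ n, I (wn (ψ n)) ≤ an (ψ n) := fun n => hale (ψ n)
    have hatψ : Tendsto (fun n => an (ψ n)) atTop (𝓝 (I (m h))) := hatend.comp hψat
    have hbdd_below : IsBoundedUnder (· ≥ ·) atTop (fun n => I (wn (ψ n))) :=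
      isBoundedUnder_of ⟨0, fun n => hA1 _⟩
    have hbdd_above : IsBoundedUnder (· ≤ ·) atTop (fun n => I (wn (ψ n))) := by
      obtain ⟨B, hB'⟩ := hatψ.bddAbove_range
      exact isBoundedUnder_of ⟨B, fun n => le_trans (hble n) (hB' ⟨n, rfl⟩)⟩
    have hlimsup_le : limsup (fun n => I (wn (ψ n))) atTop ≤ I (m h) := by
      have h1 : limsup (fun n => I (wn (ψ n))) atTop ≤ limsup (fun n => an (ψ n)) atTop :=
        limsup_le_limsup (Eventually.of_forall hble)
          (hbdd_below.isCoboundedUnder_le) (hatψ.isBoundedUnder_le)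
      rwa [hatψ.limsup_eq] at h1
    have hmh_le : I (m h) ≤ I ((h, l) : H × W) := hfib_le h _ rfl
    have hliminf_ge : I (m h) ≤ liminf (fun n => I (wn (ψ n))) atTop := le_trans hmh_le hA2'
    have hinfsup : liminf (fun n => I (wn (ψ n))) atTop ≤ limsup (fun n => I (wn (ψ n))) atTop :=
      liminf_le_limsup hbdd_above hbdd_below
    have heqinf : liminf (fun n => I (wn (ψ n))) atTop = I (m h) :=
      le_antisymm (le_trans hinfsup hlimsup_le) hliminf_ge
    have heqsup : limsup (fun n => I (wn (ψ n))) atTop = I (m h) :=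
      le_antisymm hlimsup_le (le_trans hliminf_ge hinfsup)
    have hIlim : Tendsto (fun n => I (wn (ψ n))) atTop (𝓝 (I (m h))) :=
      tendsto_of_liminf_eq_limsup heqinf heqsup hbdd_above hbdd_below
    have hhl : ((h, l) : H × W) = m h := by
      by_contra hne
      have hlt := hfib_lt h _ rfl hne
      have : I ((h, l) : H × W) ≤ I (m h) := by
        calc I ((h, l) : H × W) ≤ liminf (fun n => I (wn (ψ n))) atTop := hA2'
          _ = I (m h) := heqinf
      linarith
    have hIconv : Tendsto (fun n => I (wn (ψ n))) atTop (𝓝 (I ((h, l) : H × W))) := by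
      rw [hhl]
      exact hIlim
    have hfin := hA3 _ _ hTconv hIconv
    rw [hhl] at hfin
    exact ⟨ψ, hfin⟩
  have hmcont : ∀ u : H, Tendsto m (𝓝 u) (𝓝 (m u)) := by
    intro u
    apply tendsto_of_subseq_tendsto
    intro ns hns
    exact hkey u ns hns
  -- the main derivative computation
  have hDer : ∀ u : H, HasFDerivAt (fun h : H => J (m h))
      ((fderiv ℝ J (m u)).comp (ContinuousLinearMap.inl ℝ H W)) u := by
    intro u
    rw [hasFDerivAt_iff_isLittleO_nhds_zero]
    have hTh : ∀ hh : H, ((fderiv ℝ J (m u)).comp (ContinuousLinearMap.inl ℝ H W)) hh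
        = fderiv ℝ J (m u) ((hh, (0:W)) : H × W) := fun hh => by
      rw [ContinuousLinearMap.comp_apply, ContinuousLinearMap.inl_apply]
    have hL : (fun hh : H => J (m u + ((hh, (0:W)) : H × W)) - J (m u)
        - fderiv ℝ J (m u) ((hh, (0:W)) : H × W)) =o[𝓝 (0:H)] (fun hh => hh) := by
      have haff : HasFDerivAt (fun hh : H => m u + ((hh, (0:W)) : H × W))
          (ContinuousLinearMap.inl ℝ H W) 0 := by
        have h1 := (ContinuousLinearMap.inl ℝ H W).hasFDerivAt (x := (0:H))
        have h2 := h1.const_add (m u)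
        simpa [ContinuousLinearMap.inl_apply] using h2
      have hJat : HasFDerivAt J (fderiv ℝ J (m u))
          ((fun hh : H => m u + ((hh, (0:W)) : H × W)) 0) := by
        have h0 : (fun hh : H => m u + ((hh, (0:W)) : H × W)) 0 = m u := by simp
        rw [h0]
        exact (hJdiff (m u)).hasFDerivAt
      have hcomp := hJat.comp (0:H) haff
      have h3 := hasFDerivAt_iff_isLittleO_nhds_zero.mp hcomp
      simp only [Function.comp, zero_add, ContinuousLinearMap.comp_apply,
        ContinuousLinearMap.inl_apply] at h3
      simpa [show (((0:H), (0:W)) : H × W) = 0 from rfl] using h3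
    have hstrict : HasStrictFDerivAt J (fderiv ℝ J (m u)) (m u) :=
      (hJC1.contDiffAt).hasStrictFDerivAt one_ne_zero
    have ho := hstrict.isLittleO
    have hγ : Tendsto (fun hh : H =>
        ((m (u + hh), m (u + hh) - ((hh, (0:W)) : H × W)) : (H × W) × (H × W)))
        (𝓝 0) (𝓝 ((m u, m u) : (H × W) × (H × W))) := by
      have t0 : Tendsto (fun hh : H => u + hh) (𝓝 0) (𝓝 u) :=
        (Continuous.tendsto' (by fun_prop) 0 u (by simp))
      have t1 : Tendsto (fun hh : H => m (u + hh)) (𝓝 (0:H)) (𝓝 (m u)) := (hmcont u).comp t0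
      have t2 : Tendsto (fun hh : H => ((hh, (0:W)) : H × W)) (𝓝 0) (𝓝 (0 : H × W)) := by
        have hc : Continuous fun hh : H => ((hh, (0:W)) : H × W) :=
          continuous_id.prodMk continuous_const
        have := hc.tendsto (0:H)
        simpa [show (((0:H), (0:W)) : H × W) = 0 from rfl] using this
      have t3 : Tendsto (fun hh : H => m (u + hh) - ((hh, (0:W)) : H × W)) (𝓝 0) (𝓝 (m u)) := by
        have := t1.sub t2
        simpa using this
      exact t1.prodMk_nhds t3
    have hU0 := ho.comp_tendsto hγ
    simp only [Function.comp_def, sub_sub_cancel] at hU0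
    have hBig : (fun hh : H => ((hh, (0:W)) : H × W)) =O[𝓝 (0:H)] (fun hh => hh) := by
      apply Asymptotics.isBigO_of_le
      intro hh
      rw [Prod.norm_def]
      simp [max_eq_left (norm_nonneg hh)]
    have hU := hU0.trans_isBigO hBig
    rw [isLittleO_iff]
    intro c hc
    filter_upwards [isLittleO_iff.mp hL hc, isLittleO_iff.mp hU hc] with hh h1 h2
    rw [hTh hh]
    have hup : J (m u + ((hh, (0:W)) : H × W)) ≤ J (m (u + hh)) := by
      apply hJmax (u + hh)
      simp [hmfst]
    have hdown : J (m (u + hh) - ((hh, (0:W)) : H × W)) ≤ J (m u) := by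
      apply hJmax u
      simp [hmfst]
    rw [Real.norm_eq_abs] at h1 h2 ⊢
    rw [abs_le] at h1 h2 ⊢
    constructor
    · linarith [h1.1]
    · linarith [h2.2]
  have hfderiv_m : ∀ u : H, fderiv ℝ (fun h : H => J (m h)) u
      = (fderiv ℝ J (m u)).comp (ContinuousLinearMap.inl ℝ H W) := fun u => (hDer u).fderiv
  have hnormeq : ∀ u : H, ‖fderiv ℝ (fun h : H => J (m h)) u‖ = ‖fderiv ℝ J (m u)‖ := by
    intro u
    rw [hfderiv_m u]
    exact hnorm_inl _ (hJsnd (m u) (hmM u))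
  refine ⟨?_, ?_, ?_⟩
  · -- (iv)
    intro u
    have hfe : (fun n => ‖fderiv ℝ (fun h : H => J (m h)) (u n)‖)
        = fun n => ‖fderiv ℝ J (m (u n))‖ := funext fun n => hnormeq (u n)
    constructor
    · rintro ⟨hc, h0⟩
      refine ⟨fun n => hmM _, hc, ?_⟩
      rwa [hfe] at h0
    · rintro ⟨-, hc, h0⟩
      refine ⟨hc, ?_⟩
      rwa [hfe]
  · -- (v)
    intro u
    rw [hfderiv_m u]
    constructor
    · intro h0
      refine ContinuousLinearMap.ext fun z => ?_
      show fderiv ℝ J (m u) z = (0 : H × W →L[ℝ] ℝ) z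
      rw [ContinuousLinearMap.zero_apply]
      conv_lhs => rw [show z = ((z.1, (0:W)) : H × W) + (((0:H), z.2) : H × W) by
        refine Prod.ext ?_ ?_ <;> simp]
      rw [map_add, hJsnd (m u) (hmM u) z.2, add_zero]
      have h1 := ContinuousLinearMap.ext_iff.mp h0 z.1
      rw [ContinuousLinearMap.comp_apply, ContinuousLinearMap.inl_apply,
        ContinuousLinearMap.zero_apply] at h1
      exact h1
    · intro h0
      rw [h0, ContinuousLinearMap.zero_comp]
  · -- (vi)
    intro hJeven h
    have hIeven : ∀ w : H × W, I (-w) = I w := by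
      intro w
      have e1 := hJ w
      have e2 := hJ (-w)
      have e3 := hJeven w
      have e4 : ‖(-w).1‖ = ‖w.1‖ := by
        rw [Prod.fst_neg, norm_neg]
      rw [e4] at e2
      linarith
    have hnegM : (-(m h)) ∈ NatConstraint I := by
      intro v
      have hneg : HasFDerivAt (fun w : H × W => -w)
          (-(ContinuousLinearMap.id ℝ (H × W))) (m h) := (hasFDerivAt_id (m h)).neg
      have hI2 : HasFDerivAt (fun w : H × W => I (-w))
          ((fderiv ℝ I (-(m h))).comp (-(ContinuousLinearMap.id ℝ (H × W)))) (m h) :=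
        ((hIdiff (-(m h))).hasFDerivAt).comp (m h) hneg
      have heqf : (fun w : H × W => I (-w)) = I := funext hIeven
      rw [heqf] at hI2
      have hI3 : fderiv ℝ I (m h)
          = (fderiv ℝ I (-(m h))).comp (-(ContinuousLinearMap.id ℝ (H × W))) := hI2.fderiv
      have h4 := hmM h (-v)
      rw [hI3, ContinuousLinearMap.comp_apply] at h4
      simpa using h4
    have hfst : (-(m h)).1 = -h := by
      rw [Prod.fst_neg, hmfst]
    have huniq := hmuniq (-h) (-(m h)) hnegM hfst
    rw [← huniq]
    exact hJeven (m h)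
end
end

section
/- Assume (A1)-(A4), (B1), (B2) and (B4), and for u ∈ X⁺ let m(u) be the unique point of M with m(u)⁺ = u. Then J ∘ m has the mountain pass geometry: (J ∘ m)(u) ≥ J(u) ≥ a > 0 for every u ∈ X⁺ with ‖u‖ = r, and for every u ∈ X⁺ with u ≠ 0 one has (J ∘ m)(tu) = ½‖m(tu)⁺‖² − I(m(tu)) → −∞ as t → ∞. -/
open Filter Topology

noncomputable section

variable {H W : Type*} [NormedAddCommGroup H] [InnerProductSpace ℝ H] [CompleteSpace H]
  [NormedAddCommGroup W] [NormedSpace ℝ W] [CompleteSpace W]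

/-- **Mountain pass geometry of `J ∘ m` (Theorem 4.6).** Under (A1)-(A4), (B1), (B2), (B4),
with `m(u)` the unique point of `M` above `u ∈ X⁺`: `(J ∘ m)(u) ≥ J(u) ≥ a > 0` whenever
`‖u‖ = r`, and `(J ∘ m)(tu) → -∞` as `t → ∞` for every `u ∈ X⁺ \ {0}`. -/
theorem statement12
    (I J : H × W → ℝ)
    (hWrefl : Function.Surjective (NormedSpace.inclusionInDoubleDual ℝ W))
    (hJ : ∀ u : H × W, J u = 1 / 2 * ‖u.1‖ ^ 2 - I u)
    -- (A1)
    (hIC1 : ContDiff ℝ 1 I) (hA1 : ∀ u : H × W, 0 ≤ I u) (hI0 : I 0 = 0)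
    -- (A2)
    (hA2 : ∀ (u : ℕ → H × W) (l : H × W), TConv u l →
      I l ≤ Filter.liminf (fun n => I (u n)) atTop)
    -- (A3)
    (hA3 : ∀ (u : ℕ → H × W) (l : H × W), TConv u l →
      Tendsto (fun n => I (u n)) atTop (𝓝 (I l)) → Tendsto u atTop (𝓝 l))
    -- (A4)
    (r a : ℝ) (hr : 0 < r)
    (ha : a = sInf {c : ℝ | ∃ h : H, ‖h‖ = r ∧ c = J (h, (0 : W))}) (hapos : 0 < a)
    -- (B1)
    (hB1 : ∀ u : ℕ → H × W, Tendsto (fun n => ‖u n‖) atTop atTop →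
      Tendsto (fun n => ‖(u n).1‖ + I (u n)) atTop atTop)
    -- (B2)
    (hB2 : ∀ (t : ℕ → ℝ) (u : ℕ → H × W) (u₀ : H), u₀ ≠ 0 → Tendsto t atTop atTop →
      Tendsto (fun n => (u n).1) atTop (𝓝 u₀) →
      Tendsto (fun n => I (t n • u n) / t n ^ 2) atTop atTop)
    -- (B4)
    (hB4 : ∀ u ∈ NatConstraint I, ∀ v : W, v ≠ 0 → I u < I (u + ((0 : H), v)))
    -- `m(h)` is the unique point of `M` above `h ∈ X⁺`
    (m : H → H × W)
    (hm : ∀ h : H, (m h ∈ NatConstraint I ∧ (m h).1 = h) ∧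
      ∀ w : H × W, w ∈ NatConstraint I ∧ w.1 = h → w = m h) :
    (∀ u : H, ‖u‖ = r → a ≤ J ((u, (0 : W)) : H × W) ∧ J ((u, (0 : W)) : H × W) ≤ J (m u)) ∧
      ∀ u : H, u ≠ 0 → Tendsto (fun t : ℝ => J (m (t • u))) atTop atBot := by
  constructor
  · intro u hur
    obtain ⟨⟨hM, h1⟩, _⟩ := hm u
    have hIle : I (m u) ≤ I ((u, (0 : W)) : H × W) := by
      by_cases h2 : (m u).2 = 0
      · have : m u = ((u, (0 : W)) : H × W) := by
          ext
          · exact h1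
          · exact h2
        rw [this]
      · have hlt := hB4 (m u) hM (-(m u).2) (neg_ne_zero.mpr h2)
        have heq : m u + (((0 : H), -(m u).2) : H × W) = ((u, (0 : W)) : H × W) := by
          ext
          · simpa using h1
          · simp
        rw [heq] at hlt
        exact le_of_lt hlt
    constructor
    · have hmem : J ((u, (0 : W)) : H × W) ∈
          {c : ℝ | ∃ h : H, ‖h‖ = r ∧ c = J (h, (0 : W))} := ⟨u, hur, rfl⟩
      by_cases hbdd : BddBelow {c : ℝ | ∃ h : H, ‖h‖ = r ∧ c = J (h, (0 : W))}
      · rw [ha]; exact csInf_le hbdd hmem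
      · exfalso
        have : a = 0 := by rw [ha, Real.sInf_of_not_bddBelow hbdd]
        linarith
    · rw [hJ, hJ, h1]
      simp only
      linarith
  · intro u hu
    rw [tendsto_iff_seq_tendsto]
    intro x hx
    have hx1 : ∀ᶠ n in atTop, (1 : ℝ) ≤ x n := hx.eventually_ge_atTop 1
    set v : ℕ → H × W := fun n => (x n)⁻¹ • m (x n • u) with hv
    have hv1 : ∀ᶠ n in atTop, (v n).1 = u := by
      filter_upwards [hx1] with n hn
      have hxne : x n ≠ 0 := by linarith
      show ((x n)⁻¹ • m (x n • u)).1 = u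
      rw [Prod.smul_fst, (hm (x n • u)).1.2, smul_smul, inv_mul_cancel₀ hxne, one_smul]
    have hvtend : Tendsto (fun n => (v n).1) atTop (𝓝 u) :=
      Tendsto.congr' (hv1.mono fun n h => h.symm) tendsto_const_nhds
    have hB := hB2 x v u hu hx hvtend
    have hsm : ∀ᶠ n in atTop, x n • v n = m (x n • u) := by
      filter_upwards [hx1] with n hn
      have hxne : x n ≠ 0 := by linarith
      show x n • ((x n)⁻¹ • m (x n • u)) = m (x n • u)
      rw [smul_inv_smul₀ hxne]
    have hB' : Tendsto (fun n => I (m (x n • u)) / x n ^ 2) atTop atTop :=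
      hB.congr' (hsm.mono fun n h => by rw [h])
    set c : ℕ → ℝ := fun n => 1 / 2 * ‖u‖ ^ 2 - I (m (x n • u)) / x n ^ 2 with hc
    have hcbot : Tendsto c atTop atBot := by
      have : Tendsto (fun n => -(I (m (x n • u)) / x n ^ 2)) atTop atBot :=
        tendsto_neg_atBot_iff.mpr hB'
      have h2 := tendsto_atBot_add_const_left atTop (1 / 2 * ‖u‖ ^ 2) this
      refine h2.congr fun n => by ring
    have hle : ∀ᶠ n in atTop, ((fun t : ℝ => J (m (t • u))) ∘ x) n ≤ c n := by
      filter_upwards [hx1, hcbot.eventually_le_atBot 0] with n hn hcn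
      have hxne : x n ≠ 0 := by linarith
      have hJn : J (m (x n • u)) = x n ^ 2 * c n := by
        rw [hJ, (hm (x n • u)).1.2, hc]
        have hnorm : ‖x n • u‖ = |x n| * ‖u‖ := norm_smul _ _
        have hsq : ‖x n • u‖ ^ 2 = x n ^ 2 * ‖u‖ ^ 2 := by
          rw [hnorm, mul_pow, sq_abs]
        rw [hsq]
        field_simp
      have hx2 : (1 : ℝ) ≤ x n ^ 2 := by nlinarith
      show J (m (x n • u)) ≤ c n
      rw [hJn]
      nlinarith
    exact tendsto_atBot_mono' atTop hle hcbot
end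
end

section
/- Let p > 2 be a real number. For all t ≥ 0 and all u, v ∈ ℝ³ the inequality ((t² − 1)/2)·|u|^p + t·|u|^{p−2}·⟨u, v⟩ + (1/p)·|u|^p − (1/p)·|tu + v|^p ≤ 0 holds, and the inequality is strict whenever tu + v ≠ u. -/
open Real


lemma aux_g (p : ℝ) (hp : 2 < p) {x : ℝ} (hx : 0 ≤ x) (hx1 : x ≠ 1) :
    1 / p - 1 / 2 < x ^ p / p - x ^ 2 / 2 := by
  have hp0 : 0 < p := by linarith
  set f : ℝ → ℝ := fun x => x ^ p / p - x ^ 2 / 2 with hf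
  have hcont : ContinuousOn f (Set.Ici 0) := by
    apply ContinuousOn.sub
    · have : ContinuousOn (fun x : ℝ => x ^ p) (Set.Ici 0) := fun y _ =>
        (Real.continuousAt_rpow_const y p (Or.inr hp0.le)).continuousWithinAt
      exact this.div_const _
    · fun_prop
  have hderiv : ∀ y : ℝ, 0 < y → HasDerivAt f (y ^ (p - 1) - y) y := by
    intro y hy
    have h1 : HasDerivAt (fun x : ℝ => x ^ p) (p * y ^ (p - 1)) y :=
      Real.hasDerivAt_rpow_const (Or.inl hy.ne')
    have h2 : HasDerivAt (fun x : ℝ => x ^ 2 / 2) (2 * y ^ 1 / 2) y :=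
      (hasDerivAt_pow 2 y).div_const 2
    have := (h1.div_const p).sub h2
    exact this.congr_deriv (by rw [pow_one, mul_div_cancel_left₀ _ hp0.ne']; ring)
  have hanti : StrictAntiOn f (Set.Icc 0 1) := by
    apply strictAntiOn_of_deriv_neg (convex_Icc 0 1) (hcont.mono (by
      intro y hy; exact hy.1))
    intro y hy
    rw [interior_Icc] at hy
    rw [(hderiv y hy.1).deriv]
    have : y ^ (p - 1) < y ^ (1 : ℝ) :=
      Real.rpow_lt_rpow_of_exponent_gt hy.1 hy.2 (by linarith)
    rw [Real.rpow_one] at this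
    linarith
  have hmono : StrictMonoOn f (Set.Ici 1) := by
    apply strictMonoOn_of_deriv_pos (convex_Ici 1) (hcont.mono (by
      intro y hy; simp at hy ⊢; linarith))
    intro y hy
    rw [interior_Ici] at hy
    rw [(hderiv y (by linarith [Set.mem_Ioi.mp hy])).deriv]
    have hy1 : (1:ℝ) < y := hy
    have : y ^ (1 : ℝ) < y ^ (p - 1) :=
      Real.rpow_lt_rpow_of_exponent_lt hy1 (by linarith)
    rw [Real.rpow_one] at this
    linarith
  have hf1 : f 1 = 1 / p - 1 / 2 := by simp [hf]
  rcases lt_or_gt_of_ne hx1 with h | h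
  · have := hanti (Set.mem_Icc.mpr ⟨hx, h.le⟩) (Set.mem_Icc.mpr ⟨zero_le_one, le_refl 1⟩) h
    rw [hf1] at this; exact this
  · have := hmono (Set.mem_Ici.mpr le_rfl) (Set.mem_Ici.mpr h.le) h
    rw [hf1] at this; exact this

lemma auxA (p : ℝ) (hp : 2 < p) {a b : ℝ} (ha : 0 ≤ a) (hb : 0 ≤ b) :
    a ^ (p - 2) * b ^ 2 / 2 - a ^ p / 2 + a ^ p / p - b ^ p / p ≤ 0 ∧
      (a ≠ b → a ^ (p - 2) * b ^ 2 / 2 - a ^ p / 2 + a ^ p / p - b ^ p / p < 0) := by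
  have hp0 : 0 < p := by linarith
  rcases eq_or_lt_of_le ha with ha0 | ha0
  · rw [← ha0, Real.zero_rpow (by linarith : p - 2 ≠ 0), Real.zero_rpow hp0.ne']
    constructor
    · have h1 : 0 ≤ b ^ p := Real.rpow_nonneg hb p
      have h2 := div_nonneg h1 hp0.le
      norm_num
      linarith
    · intro hab
      have hb0 : 0 < b := lt_of_le_of_ne hb (by simpa [← ha0, eq_comm] using hab)
      have h1 : 0 < b ^ p := Real.rpow_pos_of_pos hb0 p
      have h2 := div_pos h1 hp0
      norm_num
      linarith
  · -- a > 0 : set x = b / a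
    have hx : 0 ≤ b / a := div_nonneg hb ha0.le
    have hap : 0 < a ^ p := Real.rpow_pos_of_pos ha0 p
    have key : ∀ x : ℝ, 0 ≤ x → 1 / p - 1 / 2 ≤ x ^ p / p - x ^ 2 / 2 := by
      intro x hx'
      rcases eq_or_ne x 1 with rfl | hx1
      · simp
      · exact (aux_g p hp hx' hx1).le
    -- identities
    have hid1 : (b / a) ^ p = b ^ p / a ^ p := Real.div_rpow hb ha0.le p
    have hid2 : (b / a) ^ 2 = b ^ 2 / a ^ 2 := div_pow b a 2
    have hid3 : a ^ (p - 2) * a ^ 2 = a ^ p := by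
      rw [← Real.rpow_natCast a 2, ← Real.rpow_add ha0]
      norm_num
    have ha2 : (0:ℝ) < a ^ 2 := by positivity
    constructor
    · have h := key (b / a) hx
      rw [hid1, hid2] at h
      have h' := mul_le_mul_of_nonneg_left h hap.le
      have heq : a ^ p * (b ^ p / a ^ p / p - b ^ 2 / a ^ 2 / 2)
          = b ^ p / p - a ^ (p - 2) * b ^ 2 / 2 := by
        rw [← hid3]; field_simp
      rw [heq] at h'
      have hexp : a ^ p * (1 / p - 1 / 2) = a ^ p / p - a ^ p / 2 := by ring
      rw [hexp] at h'
      linarith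
    · intro hab
      have hx1 : b / a ≠ 1 := by
        intro h; exact hab ((div_eq_one_iff_eq ha0.ne').mp h).symm
      have h := aux_g p hp hx hx1
      rw [hid1, hid2] at h
      have h' := mul_lt_mul_of_pos_left h hap
      have heq : a ^ p * (b ^ p / a ^ p / p - b ^ 2 / a ^ 2 / 2)
          = b ^ p / p - a ^ (p - 2) * b ^ 2 / 2 := by
        rw [← hid3]; field_simp
      rw [heq] at h'
      have hexp : a ^ p * (1 / p - 1 / 2) = a ^ p / p - a ^ p / 2 := by ring
      rw [hexp] at h'
      linarith
lemma auxKey (p : ℝ) (hp : 2 < p) {t a b c : ℝ} (ht : 0 ≤ t) (ha : 0 < a) (hb : 0 ≤ b)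
    (hc : c ≤ a * b) :
    ((t ^ 2 - 1) / 2 * a ^ p + t * a ^ (p - 2) * (c - t * a ^ 2)
        + 1 / p * a ^ p - 1 / p * b ^ p ≤ 0) ∧
      ((a ≠ b ∨ t = 0 ∨ c < a * b) →
        (t ^ 2 - 1) / 2 * a ^ p + t * a ^ (p - 2) * (c - t * a ^ 2)
          + 1 / p * a ^ p - 1 / p * b ^ p < 0) := by
  have hp0 : 0 < p := by linarith
  have hA2 : 0 < a ^ (p - 2) := Real.rpow_pos_of_pos ha (p - 2)
  have hap : 0 < a ^ p := Real.rpow_pos_of_pos ha p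
  have h3 : a ^ (p - 2) * a ^ 2 = a ^ p := by
    rw [← Real.rpow_natCast a 2, ← Real.rpow_add ha]
    norm_num
  have hA := auxA p hp ha.le hb
  have hsq : 0 ≤ a ^ (p - 2) * (t * a - b) ^ 2 := by positivity
  have hct : t * a ^ (p - 2) * c ≤ t * a ^ (p - 2) * (a * b) :=
    mul_le_mul_of_nonneg_left hc (by positivity)
  have hid : (t ^ 2 - 1) / 2 * a ^ p + t * a ^ (p - 2) * (c - t * a ^ 2)
        + 1 / p * a ^ p - 1 / p * b ^ p
      = (a ^ (p - 2) * b ^ 2 / 2 - a ^ p / 2 + a ^ p / p - b ^ p / p)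
        + (t * a ^ (p - 2) * c - t * a ^ (p - 2) * (a * b))
        - a ^ (p - 2) * (t * a - b) ^ 2 / 2 := by
    rw [← h3]; ring
  constructor
  · rw [hid]; linarith [hA.1]
  · intro hd
    rcases eq_or_ne a b with rfl | hab
    · rcases hd with h | rfl | hclt
      · exact absurd rfl h
      · rw [hid]
        have h4 : a ^ (p - 2) * ((0:ℝ) * a - a) ^ 2 = a ^ (p - 2) * a ^ 2 := by ring
        rw [h4, h3]
        simp only [zero_mul, sub_self, mul_zero, zero_sub]
        linarith [hA.1]
      · rcases eq_or_lt_of_le ht with rfl | ht0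
        · rw [hid]
          have h4 : a ^ (p - 2) * ((0:ℝ) * a - a) ^ 2 = a ^ (p - 2) * a ^ 2 := by ring
          rw [h4, h3]
          simp only [zero_mul, sub_self, mul_zero, zero_sub]
          linarith [hA.1]
        · have hct' : t * a ^ (p - 2) * c < t * a ^ (p - 2) * (a * a) :=
            mul_lt_mul_of_pos_left hclt (by positivity)
          rw [hid]; linarith [hA.1, hsq]
    · rw [hid]; linarith [hA.2 hab, hsq, hct]
/-- **The model nonlinearity `F₀(u) = |u|^p / p` satisfies (F5).** For `p > 2`, `t ≥ 0` and
`u v : ℝ³`, `((t²-1)/2)|u|^p + t|u|^{p-2}⟨u,v⟩ + (1/p)|u|^p - (1/p)|tu+v|^p ≤ 0`, with strict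
inequality whenever `tu + v ≠ u`. -/
theorem statement15 (p : ℝ) (hp : 2 < p) (t : ℝ) (ht : 0 ≤ t)
    (u v : EuclideanSpace ℝ (Fin 3)) :
    (t ^ 2 - 1) / 2 * ‖u‖ ^ p + t * ‖u‖ ^ (p - 2) * (inner ℝ u v : ℝ)
        + 1 / p * ‖u‖ ^ p - 1 / p * ‖t • u + v‖ ^ p ≤ 0 ∧
      (t • u + v ≠ u →
        (t ^ 2 - 1) / 2 * ‖u‖ ^ p + t * ‖u‖ ^ (p - 2) * (inner ℝ u v : ℝ)
          + 1 / p * ‖u‖ ^ p - 1 / p * ‖t • u + v‖ ^ p < 0) := by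
  have hp0 : (0:ℝ) < p := by linarith
  rcases eq_or_ne u 0 with rfl | hu
  · simp only [smul_zero, zero_add, norm_zero, inner_zero_left, Real.zero_rpow hp0.ne',
      mul_zero, zero_mul, add_zero, zero_sub, zero_add]
    have h1 : (0:ℝ) ≤ ‖v‖ ^ p := Real.rpow_nonneg (norm_nonneg v) p
    constructor
    · have : 0 ≤ 1 / p * ‖v‖ ^ p := by positivity
      linarith
    · intro hv
      have hv0 : 0 < ‖v‖ := norm_pos_iff.mpr hv
      have : 0 < 1 / p * ‖v‖ ^ p := by
        have := Real.rpow_pos_of_pos hv0 p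
        positivity
      linarith
  · set w := t • u + v with hw
    have hiv : (inner ℝ u v : ℝ) = (inner ℝ u w : ℝ) - t * ‖u‖ ^ 2 := by
      rw [hw, inner_add_right, real_inner_smul_right, real_inner_self_eq_norm_sq]; ring
    have ha : 0 < ‖u‖ := norm_pos_iff.mpr hu
    have hc : (inner ℝ u w : ℝ) ≤ ‖u‖ * ‖w‖ := real_inner_le_norm u w
    have K := auxKey p hp ht ha (norm_nonneg w) hc
    rw [hiv]
    refine ⟨K.1, fun hne => K.2 ?_⟩
    rcases eq_or_ne ‖u‖ ‖w‖ with he | hne'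
    · by_cases ht0 : t = 0
      · exact Or.inr (Or.inl ht0)
      · refine Or.inr (Or.inr (lt_of_le_of_ne hc fun heq => hne ?_))
        have h2 : ‖w‖ • u = ‖u‖ • w := inner_eq_norm_mul_iff_real.mp heq
        rw [← he] at h2
        exact (smul_right_injective _ ha.ne' h2).symm
    · exact Or.inl hne'
end

section
/- Let Ω ⊆ ℝ³ be invariant under all rotations about the x₃-axis, and let E : Ω → ℝ³ be equivariant under these rotations, i.e. E(gx) = g·E(x) for every x ∈ Ω and every rotation g of ℝ³ fixing the x₃-axis (g = diag(R, 1) with R ∈ SO(2)). Then there exist unique functions α, β, γ defined on D := {(r, z) ∈ (0, ∞) × ℝ : (r, 0, z) ∈ Ω} such that for every x = (x₁, x₂, x₃) ∈ Ω with r := √(x₁² + x₂²) > 0 one has E(x) = α(r, x₃)·(−x₂, x₁, 0) + β(r, x₃)·(x₁, x₂, 0) + γ(r, x₃)·(0, 0, 1). -/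
/-- The rotation `diag(R, 1)` of `ℝ³` about the `x₃`-axis, with 2×2 block `R`. -/
noncomputable def rotAx (R : Matrix (Fin 2) (Fin 2) ℝ) : Matrix (Fin 3) (Fin 3) ℝ :=
  Matrix.reindex finSumFinEquiv finSumFinEquiv
    (Matrix.fromBlocks R 0 0 (1 : Matrix (Fin 1) (Fin 1) ℝ))

private lemma statement18.e0 : (finSumFinEquiv.symm (0 : Fin 3) : Fin 2 ⊕ Fin 1) = Sum.inl 0 := rfl
private lemma statement18.e1 : (finSumFinEquiv.symm (1 : Fin 3) : Fin 2 ⊕ Fin 1) = Sum.inl 1 := rfl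
private lemma statement18.e2 : (finSumFinEquiv.symm (2 : Fin 3) : Fin 2 ⊕ Fin 1) = Sum.inr 0 := rfl

private lemma statement18.rotAx_mulVec (R : Matrix (Fin 2) (Fin 2) ℝ) (x : Fin 3 → ℝ) :
    (rotAx R).mulVec x = ![R 0 0 * x 0 + R 0 1 * x 1, R 1 0 * x 0 + R 1 1 * x 1, x 2] := by
  funext i
  fin_cases i <;>
    simp [rotAx, Matrix.mulVec, dotProduct, Fin.sum_univ_three,
      Matrix.reindex_apply, Matrix.submatrix_apply, statement18.e0, statement18.e1,
      statement18.e2]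

private lemma statement18.key0 (r x0 x1 E0 E1 : ℝ) (hrne : r ≠ 0) (hr2 : r^2 = x0^2+x1^2) :
    E0 = (-x1*E0 + x0*E1)/r/r * (-x1) + (x0*E0+x1*E1)/r/r * x0 := by
  have hs : x0^2+x1^2 ≠ 0 := hr2 ▸ pow_ne_zero 2 hrne
  rw [div_div, ← sq, hr2]
  field_simp
  linear_combination (E0*x0^2 + x0*x1*E1) * hr2

private lemma statement18.key1 (r x0 x1 E0 E1 : ℝ) (hrne : r ≠ 0) (hr2 : r^2 = x0^2+x1^2) :
    E1 = (-x1*E0 + x0*E1)/r/r * x0 + (x0*E0+x1*E1)/r/r * x1 := by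
  have hs : x0^2+x1^2 ≠ 0 := hr2 ▸ pow_ne_zero 2 hrne
  rw [div_div, ← sq, hr2]
  field_simp
  linear_combination (E1*x1^2 + x0*x1*E0) * hr2

set_option maxHeartbeats 1000000 in
/-- **Decomposition of cylindrically equivariant vector fields (Lemma 6.2).**
If `Ω ⊆ ℝ³` is invariant under all rotations about the `x₃`-axis and `E : Ω → ℝ³` is
equivariant, then there are functions `α, β, γ` of `(r, x₃)`, unique on
`D = {(r, z) : r > 0, (r,0,z) ∈ Ω}`, with
`E(x) = α(r,x₃)(-x₂,x₁,0) + β(r,x₃)(x₁,x₂,0) + γ(r,x₃)(0,0,1)` whenever `r > 0`. -/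
theorem statement18 (Ω : Set (Fin 3 → ℝ))
    (hΩ : ∀ R : Matrix (Fin 2) (Fin 2) ℝ, R ∈ Matrix.orthogonalGroup (Fin 2) ℝ → R.det = 1 →
      ∀ x ∈ Ω, (rotAx R).mulVec x ∈ Ω)
    (E : (Fin 3 → ℝ) → (Fin 3 → ℝ))
    (hE : ∀ R : Matrix (Fin 2) (Fin 2) ℝ, R ∈ Matrix.orthogonalGroup (Fin 2) ℝ → R.det = 1 →
      ∀ x ∈ Ω, E ((rotAx R).mulVec x) = (rotAx R).mulVec (E x)) :
    ∃ α β γ : ℝ → ℝ → ℝ,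
      (∀ x ∈ Ω, 0 < Real.sqrt (x 0 ^ 2 + x 1 ^ 2) →
        E x = α (Real.sqrt (x 0 ^ 2 + x 1 ^ 2)) (x 2) • ![-(x 1), x 0, 0]
            + β (Real.sqrt (x 0 ^ 2 + x 1 ^ 2)) (x 2) • ![x 0, x 1, 0]
            + γ (Real.sqrt (x 0 ^ 2 + x 1 ^ 2)) (x 2) • ![0, 0, 1]) ∧
      ∀ α' β' γ' : ℝ → ℝ → ℝ,
        (∀ x ∈ Ω, 0 < Real.sqrt (x 0 ^ 2 + x 1 ^ 2) →
          E x = α' (Real.sqrt (x 0 ^ 2 + x 1 ^ 2)) (x 2) • ![-(x 1), x 0, 0]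
              + β' (Real.sqrt (x 0 ^ 2 + x 1 ^ 2)) (x 2) • ![x 0, x 1, 0]
              + γ' (Real.sqrt (x 0 ^ 2 + x 1 ^ 2)) (x 2) • ![0, 0, 1]) →
        ∀ r z : ℝ, 0 < r → ![r, 0, z] ∈ Ω →
          α' r z = α r z ∧ β' r z = β r z ∧ γ' r z = γ r z := by
  refine ⟨fun r z => E ![r, 0, z] 1 / r, fun r z => E ![r, 0, z] 0 / r,
    fun r z => E ![r, 0, z] 2, ?_, ?_⟩
  · intro x hx hr
    set r := Real.sqrt (x 0 ^ 2 + x 1 ^ 2) with hrdef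
    have hr2 : r ^ 2 = x 0 ^ 2 + x 1 ^ 2 := Real.sq_sqrt (by positivity)
    have hrne : r ≠ 0 := ne_of_gt hr
    set R : Matrix (Fin 2) (Fin 2) ℝ := !![x 0 / r, x 1 / r; -(x 1) / r, x 0 / r] with hR
    have hR00 : R 0 0 = x 0 / r := by rw [hR]; simp
    have hR01 : R 0 1 = x 1 / r := by rw [hR]; simp
    have hR10 : R 1 0 = -(x 1) / r := by rw [hR]; simp
    have hR11 : R 1 1 = x 0 / r := by rw [hR]; simp
    have hmem : R ∈ Matrix.orthogonalGroup (Fin 2) ℝ := by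
      rw [Matrix.mem_orthogonalGroup_iff]
      ext i j
      fin_cases i <;> fin_cases j <;>
        simp [hR, Matrix.mul_apply, Fin.sum_univ_two, Matrix.one_apply] <;>
        field_simp <;>
        first
          | linear_combination -hr2
          | linear_combination hr2
          | ring
    have hdet : R.det = 1 := by
      rw [Matrix.det_fin_two, hR00, hR01, hR10, hR11]
      field_simp
      linear_combination -hr2
    have heq := hE R hmem hdet x hx
    have hvec : (rotAx R).mulVec x = ![r, 0, x 2] := by
      rw [statement18.rotAx_mulVec]
      funext i
      fin_cases i <;>
        simp only [hR00, hR01, hR10, hR11, Matrix.cons_val_zero, Matrix.cons_val_one,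
          Matrix.head_cons, Fin.isValue]
      · show x 0 / r * x 0 + x 1 / r * x 1 = r
        field_simp; linear_combination -hr2
      · show -(x 1) / r * x 0 + x 0 / r * x 1 = 0
        field_simp; ring
      · rfl
    rw [hvec, statement18.rotAx_mulVec] at heq
    have h0 : E ![r, 0, x 2] 0 = (x 0 * E x 0 + x 1 * E x 1) / r := by
      rw [heq]
      show R 0 0 * E x 0 + R 0 1 * E x 1 = _
      rw [hR00, hR01]; field_simp; try ring
    have h1 : E ![r, 0, x 2] 1 = (-(x 1) * E x 0 + x 0 * E x 1) / r := by
      rw [heq]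
      show R 1 0 * E x 0 + R 1 1 * E x 1 = _
      rw [hR10, hR11]; field_simp; try ring
    have h2 : E ![r, 0, x 2] 2 = E x 2 := by rw [heq]; rfl
    funext i
    fin_cases i <;> simp [h0, h1, h2]
    · linear_combination statement18.key0 r (x 0) (x 1) (E x 0) (E x 1) hrne hr2
    · linear_combination statement18.key1 r (x 0) (x 1) (E x 0) (E x 1) hrne hr2
  · intro α' β' γ' h' r z hr hmem
    have hrne : r ≠ 0 := ne_of_gt hr
    have hs : Real.sqrt ((![r, 0, z] : Fin 3 → ℝ) 0 ^ 2 + (![r, 0, z] : Fin 3 → ℝ) 1 ^ 2)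
        = r := by
      show Real.sqrt (r ^ 2 + 0 ^ 2) = r
      rw [show r ^ 2 + 0 ^ 2 = r ^ 2 by ring, Real.sqrt_sq hr.le]
    have hEeq := h' ![r, 0, z] hmem (by rw [hs]; exact hr)
    rw [hs] at hEeq
    have c0 := congrFun hEeq 0
    have c1 := congrFun hEeq 1
    have c2 := congrFun hEeq 2
    simp only [Pi.add_apply, Pi.smul_apply, smul_eq_mul, Matrix.cons_val_zero,
      Matrix.cons_val_one, Matrix.head_cons, Matrix.cons_val_two, Matrix.tail_cons,
      Fin.isValue, mul_zero, mul_one, add_zero, zero_add, neg_zero, mul_neg] at c0 c1 c2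
    refine ⟨?_, ?_, ?_⟩
    · show α' r z = E ![r, 0, z] 1 / r
      rw [c1]
      field_simp
    · show β' r z = E ![r, 0, z] 0 / r
      rw [c0]
      field_simp
    · show γ' r z = E ![r, 0, z] 2
      rw [c2]
end
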